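/- For a total priority relation ≻, the unique repair obtained by greedily adding facts in decreasing ≻-order (adding each fact if consistency is preserved) is Pareto-optimal. -/

import Mathlib

variable {α : Type*}

def DownwardClosed (Cons : Set (Set α)) : Prop :=
  ∀ S ∈ Cons, ∀ S' ⊆ S, S' ∈ Cons

def IsConflict (D : Set α) (Cons : Set (Set α)) (C : Set α) : Prop :=
  C ⊆ D ∧ C ∉ Cons ∧ ∀ C' ⊂ C, C' ∈ Cons

def IsRepair (D : Set α) (Cons : Set (Set α)) (R : Set α) : Prop :=
  R ⊆ D ∧ R ∈ Cons ∧ ∀ S, S ⊆ D → S ∈ Cons → R ⊆ S → S = R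

def Acyclic (pr : α → α → Prop) : Prop :=
  ∀ a, ¬ Relation.TransGen pr a a

def PriorityRel (D : Set α) (Cons : Set (Set α)) (pr : α → α → Prop) : Prop :=
  Acyclic pr ∧ ∀ a b, pr a b → ∃ C, IsConflict D Cons C ∧ a ∈ C ∧ b ∈ C

def ParetoImp (Cons : Set (Set α)) (pr : α → α → Prop) (D R B : Set α) : Prop :=
  B ⊆ D ∧ B ∈ Cons ∧ ∃ β ∈ B \ R, ∀ a ∈ R \ B, pr β a

def GlobalImp (Cons : Set (Set α)) (pr : α → α → Prop) (D R B : Set α) : Prop :=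
  B ⊆ D ∧ B ∈ Cons ∧ B ≠ R ∧ ∀ a ∈ R \ B, ∃ β ∈ B \ R, pr β a

def ParetoOpt (Cons : Set (Set α)) (pr : α → α → Prop) (D R : Set α) : Prop :=
  IsRepair D Cons R ∧ ∀ B, ¬ ParetoImp Cons pr D R B

def GlobalOpt (Cons : Set (Set α)) (pr : α → α → Prop) (D R : Set α) : Prop :=
  IsRepair D Cons R ∧ ∀ B, ¬ GlobalImp Cons pr D R B

def TotalPrio (D : Set α) (Cons : Set (Set α)) (pr : α → α → Prop) : Prop :=
  ∀ a b, a ≠ b → (∃ C, IsConflict D Cons C ∧ a ∈ C ∧ b ∈ C) → pr a b ∨ pr b a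

def IsCompletion (D : Set α) (Cons : Set (Set α)) (pr pr' : α → α → Prop) : Prop :=
  PriorityRel D Cons pr' ∧ TotalPrio D Cons pr' ∧ ∀ a b, pr a b → pr' a b

def ComplOpt (Cons : Set (Set α)) (pr : α → α → Prop) (D R : Set α) : Prop :=
  ∃ pr', IsCompletion D Cons pr pr' ∧ GlobalOpt Cons pr' D R

open Classical in
/-- Greedy construction: process the elements of the list in order, adding each element
whenever consistency is preserved. -/
noncomputable def greedy (Cons : Set (Set α)) : List α → Set α → Set α
  | [], S => S
  | a :: l, S => greedy Cons l (if insert a S ∈ Cons then insert a S else S)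

lemma greedy_mono (Cons : Set (Set α)) :
    ∀ (l : List α) (S : Set α), S ⊆ greedy Cons l S
  | [], _ => subset_rfl
  | a :: l, S => by
    simp only [greedy]
    split
    · exact (Set.subset_insert a S).trans (greedy_mono Cons l _)
    · exact greedy_mono Cons l S

lemma greedy_cons_mem (Cons : Set (Set α)) :
    ∀ (l : List α) (S : Set α), S ∈ Cons → greedy Cons l S ∈ Cons
  | [], _, h => h
  | _ :: l, S, h => by
    simp only [greedy]
    split
    · exact greedy_cons_mem Cons l _ ‹_›
    · exact greedy_cons_mem Cons l _ h

lemma greedy_subset (Cons : Set (Set α)) :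
    ∀ (l : List α) (S : Set α), greedy Cons l S ⊆ S ∪ {x | x ∈ l}
  | [], S => by simp [greedy]
  | a :: l, S => by
    simp only [greedy]
    intro x hx
    split at hx <;> rcases greedy_subset Cons l _ hx with h | h
    · rcases h with rfl | h
      · exact Or.inr (List.mem_cons_self)
      · exact Or.inl h
    · exact Or.inr (List.mem_cons_of_mem a h)
    · exact Or.inl h
    · exact Or.inr (List.mem_cons_of_mem a h)

open Classical in
lemma greedy_key (Cons : Set (Set α)) (pr : α → α → Prop) :
    ∀ (l : List α) (S : Set α), l.Pairwise (fun a b => ¬ pr b a) →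
    ∀ a ∈ l, a ∉ greedy Cons l S →
    ∃ S', S' ⊆ greedy Cons l S ∧ insert a S' ∉ Cons ∧ ∀ b ∈ S', b ∈ S ∨ ¬ pr a b
  | c :: l, S, hp, a, ha, hna => by
    rcases List.mem_cons.mp ha with rfl | ha'
    · have hif : insert a S ∉ Cons := by
        intro h
        apply hna
        simp only [greedy, if_pos h]
        exact greedy_mono Cons l _ (Set.mem_insert a S)
      refine ⟨S, ?_, hif, fun b hb => Or.inl hb⟩
      simp only [greedy, if_neg hif]
      exact greedy_mono Cons l S
    · have hna' : a ∉ greedy Cons l (if insert c S ∈ Cons then insert c S else S) := by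
        simpa only [greedy] using hna
      obtain ⟨S', h1, h2, h3⟩ :=
        greedy_key Cons pr l _ (List.pairwise_cons.mp hp).2 a ha' hna'
      refine ⟨S', by simpa only [greedy] using h1, h2, fun b hb => ?_⟩
      rcases h3 b hb with hb' | hb'
      · split at hb'
        · rcases hb' with rfl | hb'
          · exact Or.inr ((List.pairwise_cons.mp hp).1 a ha')
          · exact Or.inl hb'
        · exact Or.inl hb'
      · exact Or.inr hb'

/-- For a total priority relation ≻ (relating exactly the pairs of distinct facts
co-occurring in some conflict), the repair obtained by greedily adding facts in
decreasing ≻-order (adding each fact if consistency is preserved) is Pareto-optimal. -/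
theorem greedy_paretoOpt_of_total
    (D : Set α) (hD : D.Finite) (Cons : Set (Set α))
    (hdc : DownwardClosed Cons) (hempty : (∅ : Set α) ∈ Cons)
    (hsing : ∀ a ∈ D, ({a} : Set α) ∈ Cons)
    (pr : α → α → Prop) (hacyc : Acyclic pr)
    (hprConf : ∀ a b, pr a b → a ≠ b ∧ ∃ C, IsConflict D Cons C ∧ a ∈ C ∧ b ∈ C)
    (htot : TotalPrio D Cons pr)
    (l : List α) (hnodup : l.Nodup) (hall : ∀ a ∈ D, a ∈ l) (hlD : ∀ a ∈ l, a ∈ D)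
    (horder : l.Pairwise (fun a b => ¬ pr b a)) :
    ParetoOpt Cons pr D (greedy Cons l ∅) := by
  
  set R := greedy Cons l ∅ with hR
  have hRD : R ⊆ D := fun x hx => by
    rcases greedy_subset Cons l ∅ hx with h | h
    · exact absurd h (Set.notMem_empty x)
    · exact hlD x h
  have hRC : R ∈ Cons := greedy_cons_mem Cons l ∅ hempty
  have hmax : ∀ a ∈ D, a ∉ R → ∃ S', S' ⊆ R ∧ insert a S' ∉ Cons ∧ ∀ b ∈ S', ¬ pr a b := by
    intro a haD haR
    obtain ⟨S', h1, h2, h3⟩ := greedy_key Cons pr l ∅ horder a (hall a haD) haR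
    exact ⟨S', h1, h2, fun b hb => (h3 b hb).resolve_left (Set.notMem_empty b)⟩
  constructor
  · refine ⟨hRD, hRC, fun S hSD hSC hRS => ?_⟩
    by_contra hne
    obtain ⟨a, haS, haR⟩ := Set.not_subset.mp (fun h => hne (subset_antisymm h hRS))
    obtain ⟨S', h1, h2, _⟩ := hmax a (hSD haS) haR
    exact h2 (hdc S hSC _ (Set.insert_subset haS (h1.trans hRS)))
  · rintro B ⟨hBD, hBC, β, hβ, hprβ⟩
    obtain ⟨S', h1, h2, h3⟩ := hmax β (hBD hβ.1) hβ.2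
    by_cases hS'B : S' ⊆ B
    · exact h2 (hdc B hBC _ (Set.insert_subset hβ.1 hS'B))
    · obtain ⟨b, hbS', hbB⟩ := Set.not_subset.mp hS'B
      exact h3 b hbS' (hprβ b ⟨h1 hbS', hbB⟩)
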